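/- Let (K, δ) be a differential field of characteristic p > 0 and t transcendental over K; extend δ to K(t) with δ(t) = 0. If A ⊆ C_K is a differential p-basis of (K, δ), then A ∪ {t} is a differential p-basis of (K(t), δ). -/

import Mathlib

set_option synthInstance.maxHeartbeats 1000000
set_option maxHeartbeats 1000000

attribute [-instance] RatFunc.instAlgebraOfPolynomial

noncomputable section

variable (p : ℕ) [Fact p.Prime]

/-- The set of `p`-monomials of `A`: products `a₁^{i₁} ⋯ aₙ^{iₙ}` with the `aⱼ ∈ A`
distinct and `0 ≤ iⱼ < p`. -/
def pMonomials {F : Type*} [Field F] (A : Set F) : Set F :=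
  {m | ∃ (n : ℕ) (a : Fin n → F), Function.Injective a ∧ (∀ i, a i ∈ A) ∧
        ∃ e : Fin n → Fin p, m = ∏ j, a j ^ (e j : ℕ)}

/-- `A` is differentially `p`-independent: the `p`-monomials of `A` are linearly
independent over `F^p`. -/
def pIndep {F : Type*} [Field F] [CharP F p] (A : Set F) : Prop :=
  ∀ (n : ℕ) (a : Fin n → F), Function.Injective a → (∀ i, a i ∈ A) →
    LinearIndependent ((frobenius F p).fieldRange)
      (fun e : Fin n → Fin p => ∏ j, a j ^ (e j : ℕ))

/-- `A` is differentially `p`-spanning: the `p`-monomials of `A` span the constants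
`C_F` over `F^p`. -/
def pSpan {F : Type*} [Field F] [CharP F p] (δF : Derivation ℤ F F) (A : Set F) : Prop :=
  ∀ b : F, δF b = 0 →
    b ∈ Submodule.span ((frobenius F p).fieldRange) (pMonomials p A)

/-- `A` is a differential `p`-basis of `(F, δF)`: a subset of the constants that is
differentially `p`-independent and differentially `p`-spanning. -/
def DiffPBasis {F : Type*} [Field F] [CharP F p] (δF : Derivation ℤ F F) (A : Set F) :
    Prop :=
  (∀ x ∈ A, δF x = 0) ∧ pIndep p A ∧ pSpan p δF A

instance ratFuncCharP {K : Type*} [Field K] [CharP K p] : CharP (RatFunc K) p :=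
  charP_of_injective_ringHom (RatFunc.C (K := K)).injective p


section AuxSection
attribute [local instance 50] RatFunc.instAlgebraOfPolynomial
open Polynomial

lemma nat_aux {p r r₀ m : ℕ} (hp : 0 < p) (hr : r < p) (hr₀ : r₀ < p) :
    (r ≤ p * m + r₀ ∧ p ∣ (p * m + r₀ - r)) ↔ r = r₀ := by
  constructor
  · rintro ⟨hle, c, hc⟩
    have h2 : p * m + r₀ = p * c + r := by omega
    have h3 := congrArg (· % p) h2
    simpa [Nat.mul_add_mod, Nat.mod_eq_of_lt hr, Nat.mod_eq_of_lt hr₀] using h3.symm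
  · rintro rfl
    exact ⟨by omega, ⟨m, by omega⟩⟩

lemma coeff_pow_char {K : Type*} [Field K] [CharP K p] (f : K[X]) (j : ℕ) :
    (f ^ p).coeff j = if p ∣ j then (f.coeff (j / p)) ^ p else 0 := by
  have hp : 0 < p := (Fact.out : p.Prime).pos
  rw [← Polynomial.map_frobenius_expand p f, Polynomial.coeff_map, Polynomial.coeff_expand hp,
    apply_ite (frobenius K p), map_zero, frobenius_def]

lemma poly_indep {K : Type*} [Field K] [CharP K p] {ι : Type*} [Fintype ι] (M : ι → K)
    (hM : LinearIndependent ((frobenius K p).fieldRange) M)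
    (G : Fin p × ι → K[X])
    (hG : ∑ q : Fin p × ι, (G q) ^ p * Polynomial.C (M q.2) * Polynomial.X ^ (q.1 : ℕ) = 0) :
    ∀ q, G q = 0 := by
  have hp : 0 < p := (Fact.out : p.Prime).pos
  intro q₀
  ext m
  rw [Polynomial.coeff_zero]
  have hk := congrArg (fun f => Polynomial.coeff f (p * m + (q₀.1 : ℕ))) hG
  simp only [Polynomial.finset_sum_coeff, Polynomial.coeff_zero] at hk
  have hterm : ∀ q : Fin p × ι,
      ((G q) ^ p * Polynomial.C (M q.2) * Polynomial.X ^ (q.1 : ℕ)).coeff (p * m + (q₀.1 : ℕ))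
        = if q.1 = q₀.1 then M q.2 * ((G q).coeff m) ^ p else 0 := by
    intro q
    rw [Polynomial.coeff_mul_X_pow', Polynomial.coeff_mul_C, coeff_pow_char]
    by_cases h : (q.1 : ℕ) = (q₀.1 : ℕ)
    · have h1 : (q.1 : ℕ) ≤ p * m + (q₀.1 : ℕ) ∧ p ∣ (p * m + (q₀.1 : ℕ) - (q.1 : ℕ)) :=
        (nat_aux hp q.1.isLt q₀.1.isLt).mpr h
      have h2 : (p * m + (q₀.1 : ℕ) - (q.1 : ℕ)) / p = m := by
        rw [h]
        simp [Nat.mul_div_cancel_left _ hp]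
      rw [if_pos h1.1, if_pos h1.2, h2, if_pos (Fin.val_injective h), mul_comm]
    · have h1 := (nat_aux (r := (q.1 : ℕ)) (r₀ := (q₀.1:ℕ)) (m := m) hp q.1.isLt q₀.1.isLt).not.mpr h
      rw [if_neg (fun hq => h (congrArg Fin.val hq))]
      by_cases h2 : (q.1 : ℕ) ≤ p * m + (q₀.1 : ℕ)
      · rw [if_pos h2, if_neg (fun hd => h1 ⟨h2, hd⟩), zero_mul]
      · rw [if_neg h2]
  rw [Finset.sum_congr rfl (fun q _ => hterm q)] at hk
  rw [Fintype.sum_prod_type] at hk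
  have hsw : ∀ r : Fin p, (∑ i : ι, if r = q₀.1 then M i * ((G (r, i)).coeff m) ^ p else 0)
      = if r = q₀.1 then ∑ i : ι, M i * ((G (r, i)).coeff m) ^ p else 0 := by
    intro r; split <;> simp
  rw [Finset.sum_congr rfl (fun r _ => hsw r), Finset.sum_ite_eq' Finset.univ q₀.1
    (fun r => ∑ i : ι, M i * ((G (r, i)).coeff m) ^ p), if_pos (Finset.mem_univ _)] at hk
  have key := Fintype.linearIndependent_iff.mp hM
    (fun i => ⟨((G (q₀.1, i)).coeff m) ^ p, ⟨(G (q₀.1, i)).coeff m, rfl⟩⟩) ?_ q₀.2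
  · have : ((G (q₀.1, q₀.2)).coeff m) ^ p = 0 := congrArg Subtype.val key
    have := pow_eq_zero_iff hp.ne' |>.mp this
    simpa using this
  · rw [← hk]
    apply Finset.sum_congr rfl
    intro i _
    show (((G (q₀.1, i)).coeff m) ^ p) * M i = M i * ((G (q₀.1, i)).coeff m) ^ p
    ring

lemma core_indep {K : Type*} [Field K] [CharP K p] {ι : Type*} [Fintype ι] (M : ι → K)
    (hM : LinearIndependent ((frobenius K p).fieldRange) M) :
    LinearIndependent ((frobenius (RatFunc K) p).fieldRange)
      (fun q : Fin p × ι =>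
        algebraMap K[X] (RatFunc K) (Polynomial.C (M q.2) * Polynomial.X ^ (q.1 : ℕ))) := by
  rw [Fintype.linearIndependent_iff]
  intro g hg q₀
  have hmem : ∀ q, ∃ y, frobenius (RatFunc K) p y = (g q : RatFunc K) := fun q => (g q).2
  choose h hh using hmem
  obtain ⟨d, hd⟩ := IsLocalization.exist_integer_multiples_of_finite
    (nonZeroDivisors K[X]) h
  choose G hG using hd
  have hd0 : (d : K[X]) ≠ 0 := nonZeroDivisors.coe_ne_zero d
  have φinj : Function.Injective (algebraMap K[X] (RatFunc K)) :=
    IsFractionRing.injective K[X] (RatFunc K)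
  have φd0 : algebraMap K[X] (RatFunc K) (d : K[X]) ≠ 0 := fun hc => hd0 (φinj (by simpa using hc))
  have hGq : ∀ q, algebraMap K[X] (RatFunc K) (G q)
      = algebraMap K[X] (RatFunc K) (d : K[X]) * h q := by
    intro q
    rw [hG q, Algebra.smul_def]
  have key : ∑ q : Fin p × ι, (G q) ^ p * Polynomial.C (M q.2) * Polynomial.X ^ (q.1 : ℕ) = 0 := by
    apply φinj
    rw [map_sum, map_zero]
    calc ∑ q : Fin p × ι, algebraMap K[X] (RatFunc K)
            ((G q) ^ p * Polynomial.C (M q.2) * Polynomial.X ^ (q.1 : ℕ))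
        = (algebraMap K[X] (RatFunc K) (d : K[X])) ^ p *
            ∑ q : Fin p × ι, (g q : RatFunc K) *
              algebraMap K[X] (RatFunc K) (Polynomial.C (M q.2) * Polynomial.X ^ (q.1 : ℕ)) := by
          rw [Finset.mul_sum]
          apply Finset.sum_congr rfl
          intro q _
          rw [map_mul, map_mul, map_pow, hGq q, mul_pow, ← hh q, frobenius_def, map_mul]
          ring
      _ = 0 := by
          rw [show ∑ q : Fin p × ι, (g q : RatFunc K) *
              algebraMap K[X] (RatFunc K) (Polynomial.C (M q.2) * Polynomial.X ^ (q.1 : ℕ)) = 0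
            from hg, mul_zero]
  have hG0 : ∀ q, G q = 0 := poly_indep p M hM G key
  have hq0 : h q₀ = 0 := by
    have h1 := hGq q₀
    rw [hG0 q₀, map_zero] at h1
    exact ((mul_eq_zero.mp h1.symm).resolve_left φd0)
  apply Subtype.ext
  rw [← hh q₀, hq0, map_zero]
  rfl

/-- coefficient-wise application of δ to a polynomial -/
def coeffDeriv {K : Type*} [Field K] (δ : Derivation ℤ K K) (P : K[X]) : K[X] :=
  ⟨AddMonoidAlgebra.ofCoeff (P.toFinsupp.coeff.mapRange δ (map_zero δ))⟩

lemma coeffDeriv_coeff {K : Type*} [Field K] (δ : Derivation ℤ K K) (P : K[X]) (n : ℕ) :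
    (coeffDeriv δ P).coeff n = δ (P.coeff n) := rfl

lemma coeffDeriv_monomial {K : Type*} [Field K] (δ : Derivation ℤ K K) (n : ℕ) (c : K) :
    coeffDeriv δ (monomial n c) = monomial n (δ c) := by
  ext k
  rw [coeffDeriv_coeff, coeff_monomial, coeff_monomial, apply_ite δ, map_zero]

lemma D_algebraMap {K : Type*} [Field K] (δ : Derivation ℤ K K)
    (D : Derivation ℤ (RatFunc K) (RatFunc K))
    (hD : ∀ a : K, D (RatFunc.C a) = RatFunc.C (δ a))
    (hX : D RatFunc.X = 0) (P : K[X]) :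
    D (algebraMap K[X] (RatFunc K) P) = algebraMap K[X] (RatFunc K) (coeffDeriv δ P) := by
  induction P using Polynomial.induction_on' with
  | add f g hf hg =>
    have : coeffDeriv δ (f + g) = coeffDeriv δ f + coeffDeriv δ g := by
      ext k
      simp [coeffDeriv_coeff, coeff_add]
    rw [map_add, map_add, hf, hg, this, map_add]
  | monomial n c =>
    have hmap : ∀ y : K, algebraMap K[X] (RatFunc K) (monomial n y)
        = RatFunc.C y * RatFunc.X ^ n := by
      intro y
      rw [← Polynomial.C_mul_X_pow_eq_monomial, map_mul, map_pow,
        RatFunc.algebraMap_C, RatFunc.algebraMap_X]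
    rw [coeffDeriv_monomial, hmap, hmap, Derivation.leibniz, Derivation.leibniz_pow, hX, hD,
      smul_zero, smul_zero, smul_zero, zero_add, smul_eq_mul, mul_comm]

lemma num_denom_const {K : Type*} [Field K] (δ : Derivation ℤ K K)
    (D : Derivation ℤ (RatFunc K) (RatFunc K))
    (hD : ∀ a : K, D (RatFunc.C a) = RatFunc.C (δ a))
    (hX : D RatFunc.X = 0) (b : RatFunc K) (hb : D b = 0) :
    (∀ n, δ (b.num.coeff n) = 0) ∧ ∀ n, δ (b.denom.coeff n) = 0 := by
  set P := b.num
  set Q := b.denom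
  have hQ0 : Q ≠ 0 := b.denom_ne_zero
  have hφQ0 : algebraMap K[X] (RatFunc K) Q ≠ 0 := RatFunc.algebraMap_ne_zero hQ0
  have hPQ : b * algebraMap K[X] (RatFunc K) Q = algebraMap K[X] (RatFunc K) P := by
    rw [← RatFunc.num_div_denom b, div_mul_cancel₀ _ hφQ0]
  have hder := congrArg D hPQ
  rw [Derivation.leibniz, hb, smul_zero, add_zero, D_algebraMap δ D hD hX,
    D_algebraMap δ D hD hX, smul_eq_mul] at hder
  -- hder : b * φ (coeffDeriv Q) = φ (coeffDeriv P)
  have hmul := congrArg (fun x => x * algebraMap K[X] (RatFunc K) Q) hder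
  rw [mul_right_comm, hPQ] at hmul
  -- hmul : φ P * φ (cQ) = φ (cP) * φ Q
  have hpoly : P * coeffDeriv δ Q = coeffDeriv δ P * Q := by
    apply IsFractionRing.injective K[X] (RatFunc K)
    rw [map_mul, map_mul]
    exact hmul
  have hdvd : Q ∣ coeffDeriv δ Q := by
    have h1 : IsCoprime Q P := (RatFunc.isCoprime_num_denom b).symm
    exact h1.dvd_of_dvd_mul_left ⟨coeffDeriv δ P, by rw [hpoly]; ring⟩
  have hQmonic : Q.Monic := b.monic_denom
  have hdeg : (coeffDeriv δ Q).degree < Q.degree := by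
    rw [Polynomial.degree_eq_natDegree hQ0, degree_lt_iff_coeff_zero]
    intro m hm
    rw [coeffDeriv_coeff]
    rcases eq_or_lt_of_le (Nat.cast_le.mp hm) with h | h
    · have h1 : Q.coeff m = 1 := by rw [← h]; exact hQmonic.coeff_natDegree
      rw [h1, Derivation.map_one_eq_zero]
    · rw [coeff_eq_zero_of_natDegree_lt h, map_zero]
  have hcQ : coeffDeriv δ Q = 0 := Polynomial.eq_zero_of_dvd_of_degree_lt hdvd hdeg
  have hcP : coeffDeriv δ P = 0 := by
    have : coeffDeriv δ P * Q = 0 := by rw [← hpoly, hcQ, mul_zero]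
    exact (mul_eq_zero.mp this).resolve_right hQ0
  constructor
  · intro n; rw [← coeffDeriv_coeff δ P n, hcP, coeff_zero]
  · intro n; rw [← coeffDeriv_coeff δ Q n, hcQ, coeff_zero]

lemma C_ne_X {K : Type*} [Field K] (y : K) : RatFunc.C y ≠ RatFunc.X := by
  rw [← RatFunc.algebraMap_C, ← RatFunc.algebraMap_X]
  intro h
  exact Polynomial.X_ne_C y (IsFractionRing.injective K[X] (RatFunc K) h).symm

lemma mon_span {K : Type*} [Field K] [CharP K p] (A : Set K) (c : K)
    (hc : c ∈ Submodule.span ((frobenius K p).fieldRange) (pMonomials p A)) (n : ℕ) :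
    RatFunc.C c * RatFunc.X ^ n ∈ Submodule.span ((frobenius (RatFunc K) p).fieldRange)
      (pMonomials p ((RatFunc.C (K := K)) '' A ∪ {RatFunc.X})) := by
  have hp : 0 < p := (Fact.out : p.Prime).pos
  set S := Submodule.span ((frobenius (RatFunc K) p).fieldRange)
      (pMonomials p ((RatFunc.C (K := K)) '' A ∪ {RatFunc.X})) with hS
  -- reduce to exponent < p
  have key : ∀ (r : ℕ), r < p → ∀ (x : K),
      x ∈ Submodule.span ((frobenius K p).fieldRange) (pMonomials p A) →
      RatFunc.C x * RatFunc.X ^ r ∈ S := by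
    intro r hr x hx
    induction hx using Submodule.span_induction with
    | mem y hy =>
      obtain ⟨n', a, ainj, amem, e, rfl⟩ := hy
      apply Submodule.subset_span
      refine ⟨n' + 1, Fin.cons RatFunc.X (RatFunc.C ∘ a), ?_, ?_, Fin.cons ⟨r, hr⟩ e, ?_⟩
      · rw [Fin.cons_injective_iff]
        constructor
        · rintro ⟨j, hj⟩
          exact C_ne_X (a j) hj
        · exact fun i j hij => ainj (RatFunc.C.injective hij)
      · intro i
        induction i using Fin.cases with
        | zero => right; rfl
        | succ j => left; exact ⟨a j, amem j, rfl⟩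
      · rw [Fin.prod_univ_succ]
        simp only [Fin.cons_zero, Fin.cons_succ, Function.comp]
        rw [mul_comm, map_prod]
        congr 1
        exact Finset.prod_congr rfl fun j _ => map_pow RatFunc.C (a j) ((e j : ℕ))
    | zero => rw [map_zero, zero_mul]; exact S.zero_mem
    | add y z hy hz hy' hz' => rw [map_add, add_mul]; exact S.add_mem hy' hz'
    | smul t y hy hy' =>
      obtain ⟨u, hu⟩ := t.2
      have : RatFunc.C (t • y) * RatFunc.X ^ r =
          (⟨RatFunc.C (t : K), ⟨RatFunc.C u, by rw [frobenius_def, ← map_pow, ← frobenius_def, hu]⟩⟩ :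
            ((frobenius (RatFunc K) p).fieldRange)) • (RatFunc.C y * RatFunc.X ^ r) := by
        show RatFunc.C ((t : K) * y) * RatFunc.X ^ r
          = RatFunc.C (t : K) * (RatFunc.C y * RatFunc.X ^ r)
        rw [map_mul]; ring
      rw [this]
      exact S.smul_mem _ hy'
  have heq : RatFunc.C c * RatFunc.X ^ n =
      (⟨(RatFunc.X ^ (n / p)) ^ p, ⟨RatFunc.X ^ (n / p), rfl⟩⟩ :
        ((frobenius (RatFunc K) p).fieldRange)) • (RatFunc.C c * RatFunc.X ^ (n % p)) := by
    show _ = (RatFunc.X ^ (n / p)) ^ p * (RatFunc.C c * RatFunc.X ^ (n % p))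
    rw [← pow_mul, mul_comm (RatFunc.X ^ (n / p * p)), mul_assoc, ← pow_add]
    congr 2
    exact (Nat.mod_add_div' n p).symm
  rw [heq]
  exact S.smul_mem _ (key (n % p) (Nat.mod_lt _ hp) c hc)

lemma indep_part {K : Type*} [Field K] [CharP K p] (A : Set K) (hInd : pIndep p A) :
    pIndep p ((RatFunc.C (K := K)) '' A ∪ {RatFunc.X}) := by
  intro n a hinj hmem
  by_cases hx : ∃ i, a i = RatFunc.X
  · obtain ⟨i₀, hi₀⟩ := hx
    match n, a, hinj, hmem, i₀, hi₀ with
    | m + 1, a, hinj, hmem, i₀, hi₀ =>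
    set σ : Equiv.Perm (Fin (m + 1)) := Equiv.swap i₀ 0 with hσ
    have hσ0 : σ 0 = i₀ := Equiv.swap_apply_right i₀ 0
    have hbs : ∀ j : Fin m, ∃ y ∈ A, RatFunc.C y = a (σ j.succ) := by
      intro j
      refine ((hmem (σ j.succ)).resolve_right ?_)
      intro hX
      have h1 : a (σ j.succ) = RatFunc.X := hX
      have h2 : σ j.succ = i₀ := hinj (h1.trans hi₀.symm)
      have h3 : j.succ = σ i₀ := by
        have := congrArg σ.symm h2
        rwa [Equiv.symm_apply_apply, hσ, Equiv.symm_swap] at this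
      rw [hσ, Equiv.swap_apply_left] at h3
      exact Fin.succ_ne_zero j h3
    choose b hbA hbC using hbs
    have binj : Function.Injective b := by
      intro i j hij
      have : a (σ i.succ) = a (σ j.succ) := by rw [← hbC i, ← hbC j, hij]
      have := σ.injective (hinj this)
      exact Fin.succ_injective m this
    have hM := hInd m b binj hbA
    have core := core_indep p (K := K) (fun f : Fin m → Fin p => ∏ j, b j ^ ((f j : ℕ))) hM
    have hcomp := core.comp
      (fun e : Fin (m + 1) → Fin p => (((e ∘ σ) 0 : Fin p), Fin.tail (e ∘ σ)))
      (by
        intro e f hef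
        have h1 : (e ∘ σ) 0 = (f ∘ σ) 0 := congrArg Prod.fst hef
        have h2 : Fin.tail (e ∘ σ) = Fin.tail (f ∘ σ) := congrArg Prod.snd hef
        have h3 : e ∘ σ = f ∘ σ := by
          funext i
          induction i using Fin.cases with
          | zero => exact h1
          | succ j => exact congrFun h2 j
        funext i
        have h4 := congrFun h3 (σ.symm i)
        simpa using h4)
    convert hcomp using 1
    funext e
    show ∏ j, a j ^ ((e j : ℕ)) = _
    rw [← Equiv.prod_comp σ (fun j => a j ^ ((e j : ℕ)))]
    rw [Fin.prod_univ_succ]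
    simp only [Function.comp]
    rw [hσ0, hi₀]
    rw [map_mul, map_pow, RatFunc.algebraMap_C, RatFunc.algebraMap_X, map_prod]
    have : ∀ j : Fin m, a (σ j.succ) ^ ((e (σ j.succ)) : ℕ)
        = RatFunc.C (b j) ^ ((Fin.tail (e ∘ σ) j : ℕ)) := by
      intro j
      rw [hbC j]
      rfl
    rw [Finset.prod_congr rfl (fun j _ => this j)]
    rw [mul_comm]
    congr 1
    apply Finset.prod_congr rfl
    intro j _
    rw [map_pow]
  · push_neg at hx
    have hbs : ∀ i, ∃ y ∈ A, RatFunc.C y = a i := by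
      intro i
      exact (hmem i).resolve_right (fun h => hx i h)
    choose b hbA hbC using hbs
    have binj : Function.Injective b := by
      intro i j hij
      exact hinj (by rw [← hbC i, ← hbC j, hij])
    have hM := hInd n b binj hbA
    have core := core_indep p (K := K) (fun f : Fin n → Fin p => ∏ j, b j ^ ((f j : ℕ))) hM
    have hcomp := core.comp (fun e : Fin n → Fin p => (((0 : Fin p)), e))
      (fun e f hef => (Prod.mk.injEq .. ▸ hef).2)
    convert hcomp using 1
    funext e
    show ∏ j, a j ^ ((e j : ℕ)) = _
    simp only [Function.comp]
    rw [map_mul, map_pow, RatFunc.algebraMap_C, RatFunc.algebraMap_X, map_prod]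
    simp only [Fin.val_zero, pow_zero, mul_one]
    apply Finset.prod_congr rfl
    intro j _
    rw [map_pow, hbC j]


lemma constCoeff_mul {K : Type*} [Field K] (δ : Derivation ℤ K K) {f g : K[X]}
    (hf : ∀ n, δ (f.coeff n) = 0) (hg : ∀ n, δ (g.coeff n) = 0) :
    ∀ n, δ ((f * g).coeff n) = 0 := by
  intro n
  rw [Polynomial.coeff_mul]
  have h1 : δ (∑ x ∈ Finset.HasAntidiagonal.antidiagonal n, f.coeff x.1 * g.coeff x.2)
      = ∑ x ∈ Finset.HasAntidiagonal.antidiagonal n, δ (f.coeff x.1 * g.coeff x.2) :=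
    map_sum δ.toLinearMap _ _
  rw [h1]
  apply Finset.sum_eq_zero
  intro x _
  rw [Derivation.leibniz, hf, hg, smul_zero, smul_zero, add_zero]

lemma constCoeff_pow {K : Type*} [Field K] (δ : Derivation ℤ K K) {f : K[X]}
    (hf : ∀ n, δ (f.coeff n) = 0) : ∀ (k : ℕ) (n : ℕ), δ ((f ^ k).coeff n) = 0 := by
  intro k
  induction k with
  | zero =>
    intro n
    rcases eq_or_ne n 0 with rfl | hn
    · simp [Polynomial.coeff_one, Derivation.map_one_eq_zero]
    · simp [Polynomial.coeff_one, hn]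
  | succ k ih =>
    rw [pow_succ]
    exact constCoeff_mul δ ih hf

lemma poly_span {K : Type*} [Field K] [CharP K p] (A : Set K) (f : K[X])
    (δ : Derivation ℤ K K) (hf : ∀ n, δ (f.coeff n) = 0) (hAspan : pSpan p δ A) :
    algebraMap K[X] (RatFunc K) f ∈ Submodule.span ((frobenius (RatFunc K) p).fieldRange)
      (pMonomials p ((RatFunc.C (K := K)) '' A ∪ {RatFunc.X})) := by
  have hrepr : algebraMap K[X] (RatFunc K) f
      = ∑ i ∈ f.support, RatFunc.C (f.coeff i) * RatFunc.X ^ i := by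
    conv_lhs => rw [f.as_sum_support]
    rw [map_sum]
    apply Finset.sum_congr rfl
    intro i _
    rw [← Polynomial.C_mul_X_pow_eq_monomial, map_mul, map_pow, RatFunc.algebraMap_C,
      RatFunc.algebraMap_X]
  rw [hrepr]
  apply Submodule.sum_mem
  intro i _
  exact mon_span p A _ (hAspan _ (hf i)) i

lemma span_part {K : Type*} [Field K] [CharP K p] (δ : Derivation ℤ K K) (A : Set K)
    (D : Derivation ℤ (RatFunc K) (RatFunc K))
    (hD : ∀ a : K, D (RatFunc.C a) = RatFunc.C (δ a))
    (hX : D RatFunc.X = 0) (hAspan : pSpan p δ A) :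
    pSpan p D ((RatFunc.C (K := K)) '' A ∪ {RatFunc.X}) := by
  intro b hb
  have hp : 0 < p := (Fact.out : p.Prime).pos
  obtain ⟨k, hk⟩ := Nat.exists_eq_succ_of_ne_zero hp.ne'
  obtain ⟨hP, hQ⟩ := num_denom_const δ D hD hX b hb
  set φ := algebraMap (Polynomial K) (RatFunc K) with hφ
  have hφQ0 : φ b.denom ≠ 0 := RatFunc.algebraMap_ne_zero b.denom_ne_zero
  have hcoef : ∀ n, δ ((b.num * b.denom ^ (p - 1)).coeff n) = 0 := fun n =>
    constCoeff_mul δ hP (fun m => constCoeff_pow δ hQ (p - 1) m) n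
  have hmem := poly_span p A (b.num * b.denom ^ (p - 1)) δ hcoef hAspan
  have hPQ : b * φ b.denom = φ b.num :=
    ((div_eq_iff hφQ0).mp (RatFunc.num_div_denom b)).symm
  have heq : b = (⟨((φ b.denom)⁻¹) ^ p, ⟨(φ b.denom)⁻¹, rfl⟩⟩ :
        ((frobenius (RatFunc K) p).fieldRange)) • (φ (b.num * b.denom ^ (p - 1))) := by
    show b = ((φ b.denom)⁻¹) ^ p * (φ (b.num * b.denom ^ (p - 1)))
    rw [map_mul, map_pow]
    apply mul_right_cancel₀ (pow_ne_zero p hφQ0)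
    calc b * φ b.denom ^ p = (b * φ b.denom) * φ b.denom ^ (p - 1) := by
          rw [hk, Nat.succ_sub_one, pow_succ']
          ring
      _ = φ b.num * φ b.denom ^ (p - 1) := by rw [hPQ]
      _ = (φ b.denom)⁻¹ ^ p * (φ b.num * φ b.denom ^ (p - 1)) * φ b.denom ^ p := by
          rw [inv_pow]
          field_simp
  rw [heq]
  exact Submodule.smul_mem _ _ hmem

end AuxSection

/-- If `A` is a differential `p`-basis of `(K, δ)` and `δ` is extended to `K(t)` with
`δ(t) = 0` (`t` transcendental), then `A ∪ {t}` is a differential `p`-basis of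
`(K(t), δ)`. -/
theorem stmt16 {K : Type*} [Field K] [CharP K p]
    (δ : Derivation ℤ K K) (A : Set K) (hA : DiffPBasis p δ A)
    (D : Derivation ℤ (RatFunc K) (RatFunc K))
    (hD : ∀ a : K, D (RatFunc.C a) = RatFunc.C (δ a))
    (hX : D RatFunc.X = 0) :
    DiffPBasis p D ((RatFunc.C (K := K)) '' A ∪ {RatFunc.X}) := by
  obtain ⟨hAconst, hAind, hAspan⟩ := hA
  refine ⟨?_, indep_part p A hAind, span_part p δ A D hD hX hAspan⟩
  intro x hx
  rcases hx with ⟨a, haA, rfl⟩ | hx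
  · rw [hD, hAconst a haA, map_zero]
  · rw [Set.mem_singleton_iff.mp hx]
    exact hX
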